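/- Let a : ℤ² → ℂ be finitely supported. Then the following are equivalent: (i) there exists a finitely supported α : ℤ² → ℂ with a = Δ_♯ α; (ii) there exists R > 0 such that the support of a is contained in {u ∈ ℤ² : |u| ≤ R} and, for every z ∈ ℤ², every finite D ⊂ ℤ² containing {z + u : u ∈ ℤ², |u| ≤ R}, and every w ∈ D with |w − z| > R, one has Σ_{u ∈ ℤ²} a(u)·G_D(z + u, w) = 0. (This is the characterization of null linear local fields of the fermionic discrete Gaussian free field: the linear field Σ_u a(u) ξ(u) is a null field if and only if it lies in the span of the discrete Laplacians Δ_♯ ξ(u), and likewise for θ.) -/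

import Mathlib

/-! STATEMENT 3: characterization of null linear local fields of the fermionic DGFF. -/

/-- Two vertices of `ℤ²` are neighbours iff their Euclidean distance is `1`. -/
def LatticeAdj (u v : ℤ × ℤ) : Prop :=
  (u.1 - v.1) ^ 2 + (u.2 - v.2) ^ 2 = 1

instance : DecidableRel LatticeAdj := fun u v => by unfold LatticeAdj; infer_instance

/-- The full-plane discrete Laplacian on `ℤ²`:
`Δ f (u) = Σ_{v ∼ u} (f v − f u)` (sum over the four nearest neighbours). -/
def fullLap (f : ℤ × ℤ → ℂ) (u : ℤ × ℤ) : ℂ :=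
  f (u.1 + 1, u.2) + f (u.1 - 1, u.2) + f (u.1, u.2 + 1) + f (u.1, u.2 - 1) - 4 * f u

/-- The Dirichlet Laplacian matrix of a finite set `D ⊂ ℤ²`:
`(Δ^D f)(x) = Σ_{y ∼ x, y ∈ D} f y − 4 f x`. -/
def dirichletLapMatrix (D : Finset (ℤ × ℤ)) : Matrix D D ℂ :=
  Matrix.of fun x y =>
    (if LatticeAdj (x : ℤ × ℤ) (y : ℤ × ℤ) then (1 : ℂ) else 0) - (if x = y then 4 else 0)

/-- The Dirichlet Green's function `G_D := −(Δ^D)⁻¹` of a finite set `D ⊂ ℤ²`, with the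
convention `G_D(x,y) = 0` whenever `x ∉ D` or `y ∉ D`. -/
noncomputable def dirichletGreen (D : Finset (ℤ × ℤ)) (x y : ℤ × ℤ) : ℂ :=
  if hx : x ∈ D then
    if hy : y ∈ D then (-(dirichletLapMatrix D)⁻¹) ⟨x, hx⟩ ⟨y, hy⟩ else 0
  else 0

/-- The Euclidean norm of a lattice point. -/
noncomputable def latticeNorm (u : ℤ × ℤ) : ℝ :=
  Real.sqrt ((u.1 : ℝ) ^ 2 + (u.2 : ℝ) ^ 2)

lemma lattice_sq_eq_one {d1 d2 : ℤ} (h : d1 ^ 2 + d2 ^ 2 = 1) :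
    (d1 = 1 ∧ d2 = 0) ∨ (d1 = -1 ∧ d2 = 0) ∨ (d1 = 0 ∧ d2 = 1) ∨ (d1 = 0 ∧ d2 = -1) := by
  have b1 : d1 ≤ 1 := by nlinarith [sq_nonneg d2, sq_nonneg (d1 - 1)]
  have b2 : -1 ≤ d1 := by nlinarith [sq_nonneg d2, sq_nonneg (d1 + 1)]
  have b3 : d2 ≤ 1 := by nlinarith [sq_nonneg d1, sq_nonneg (d2 - 1)]
  have b4 : -1 ≤ d2 := by nlinarith [sq_nonneg d1, sq_nonneg (d2 + 1)]
  interval_cases d1 <;> interval_cases d2 <;> simp_all <;> omega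

lemma latticeAdj_iff (x y : ℤ × ℤ) :
    LatticeAdj x y ↔ y = (x.1 + 1, x.2) ∨ y = (x.1 - 1, x.2) ∨ y = (x.1, x.2 + 1) ∨ y = (x.1, x.2 - 1) := by
  unfold LatticeAdj
  constructor
  · intro h
    rcases lattice_sq_eq_one h with ⟨h1, h2⟩ | ⟨h1, h2⟩ | ⟨h1, h2⟩ | ⟨h1, h2⟩ <;>
      simp only [Prod.ext_iff] <;> omega
  · rintro (rfl | rfl | rfl | rfl) <;> ring
lemma latticeAdj_comm (x y : ℤ × ℤ) : LatticeAdj y x ↔ LatticeAdj x y := by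
  unfold LatticeAdj
  rw [show (y.1 - x.1) ^ 2 = (x.1 - y.1) ^ 2 by ring, show (y.2 - x.2) ^ 2 = (x.2 - y.2) ^ 2 by ring]

lemma sum_adj {M : Type*} [AddCommGroup M] (D : Finset (ℤ × ℤ)) (x : ℤ × ℤ) (f : ℤ × ℤ → M)
    (hf : ∀ q, q ∉ D → f q = 0) :
    ∑ y ∈ D, (if LatticeAdj x y then f y else 0)
      = f (x.1 + 1, x.2) + f (x.1 - 1, x.2) + f (x.1, x.2 + 1) + f (x.1, x.2 - 1) := by
  have key : ∀ y ∈ D, (if LatticeAdj x y then f y else 0) =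
      ((if y = (x.1 + 1, x.2) then f y else 0) + (if y = (x.1 - 1, x.2) then f y else 0))
      + ((if y = (x.1, x.2 + 1) then f y else 0) + (if y = (x.1, x.2 - 1) then f y else 0)) := by
    intro y _
    by_cases h : LatticeAdj x y
    · rw [if_pos h]
      rcases (latticeAdj_iff x y).1 h with h1 | h1 | h1 | h1 <;> subst h1 <;>
        simp [Prod.ext_iff] <;> omega
    · rw [if_neg h, if_neg, if_neg, if_neg, if_neg] <;>
        first
          | simp
          | exact fun he => h ((latticeAdj_iff x y).2 (by tauto))
  rw [Finset.sum_congr rfl key, Finset.sum_add_distrib, Finset.sum_add_distrib,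
    Finset.sum_add_distrib, Finset.sum_ite_eq' D _ f, Finset.sum_ite_eq' D _ f,
    Finset.sum_ite_eq' D _ f, Finset.sum_ite_eq' D _ f]
  have e : ∀ c : ℤ × ℤ, (if c ∈ D then f c else 0) = f c := by
    intro c; by_cases hc : c ∈ D
    · rw [if_pos hc]
    · rw [if_neg hc, hf c hc]
  rw [e, e, e, e]; abel

lemma latticeNorm_nonneg (u : ℤ × ℤ) : 0 ≤ latticeNorm u := Real.sqrt_nonneg _

lemma latticeNorm_eq_abs (u : ℤ × ℤ) :
    latticeNorm u = ‖(⟨(u.1 : ℝ), (u.2 : ℝ)⟩ : ℂ)‖ := by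
  unfold latticeNorm
  rw [Complex.norm_def, Complex.normSq_mk]
  ring_nf

lemma latticeNorm_add_le (u v : ℤ × ℤ) :
    latticeNorm (u + v) ≤ latticeNorm u + latticeNorm v := by
  rw [latticeNorm_eq_abs, latticeNorm_eq_abs, latticeNorm_eq_abs]
  have e : (⟨(((u + v).1 : ℤ) : ℝ), (((u + v).2 : ℤ) : ℝ)⟩ : ℂ)
      = ⟨(u.1 : ℝ), (u.2 : ℝ)⟩ + ⟨(v.1 : ℝ), (v.2 : ℝ)⟩ := by
    apply Complex.ext <;> simp [Prod.fst_add, Prod.snd_add] <;> push_cast <;> ring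
  rw [e]
  exact norm_add_le _ _

lemma latticeNorm_unit₁ : latticeNorm (1, 0) = 1 := by
  unfold latticeNorm; norm_num

lemma latticeNorm_unit₂ : latticeNorm (-1, 0) = 1 := by
  unfold latticeNorm; norm_num

lemma latticeNorm_unit₃ : latticeNorm (0, 1) = 1 := by
  unfold latticeNorm; norm_num

lemma latticeNorm_unit₄ : latticeNorm (0, -1) = 1 := by
  unfold latticeNorm; norm_num

lemma abs_fst_le (u : ℤ × ℤ) : |(u.1 : ℝ)| ≤ latticeNorm u := by
  unfold latticeNorm
  rw [← Real.sqrt_sq_eq_abs]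
  apply Real.sqrt_le_sqrt
  nlinarith [sq_nonneg ((u.2 : ℝ))]

lemma abs_snd_le (u : ℤ × ℤ) : |(u.2 : ℝ)| ≤ latticeNorm u := by
  unfold latticeNorm
  rw [← Real.sqrt_sq_eq_abs]
  apply Real.sqrt_le_sqrt
  nlinarith [sq_nonneg ((u.1 : ℝ))]

/-- Maximum principle core: a "discretely harmonic" function positive somewhere gives a
contradiction. -/
lemma no_pos (D : Finset (ℤ × ℤ)) (V : ℤ × ℤ → ℝ) (hV0 : ∀ p, p ∉ D → V p = 0)
    (key : ∀ p ∈ D,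
      V (p.1 + 1, p.2) + V (p.1 - 1, p.2) + V (p.1, p.2 + 1) + V (p.1, p.2 - 1) = 4 * V p)
    (p0 : ℤ × ℤ) (h0 : 0 < V p0) : False := by
  have hp0D : p0 ∈ D := by
    by_contra h; rw [hV0 p0 h] at h0; exact lt_irrefl _ h0
  obtain ⟨x0, hx0D, hx0max⟩ := Finset.exists_max_image D V ⟨p0, hp0D⟩
  set m := V x0 with hm
  have hmpos : 0 < m := lt_of_lt_of_le h0 (hx0max p0 hp0D)
  have hub : ∀ q, V q ≤ m := by
    intro q
    by_cases hq : q ∈ D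
    · exact hx0max q hq
    · rw [hV0 q hq]; exact le_of_lt hmpos
  have step : ∀ p : ℤ × ℤ, V p = m → V (p.1 + 1, p.2) = m := by
    intro p hpm
    have hpD : p ∈ D := by
      by_contra h; rw [hV0 p h] at hpm; exact absurd hpm.symm (ne_of_gt hmpos)
    have k := key p hpD
    have l1 := hub (p.1 + 1, p.2)
    have l2 := hub (p.1 - 1, p.2)
    have l3 := hub (p.1, p.2 + 1)
    have l4 := hub (p.1, p.2 - 1)
    rw [hpm] at k; linarith
  have seq : ∀ n : ℕ, V (x0.1 + n, x0.2) = m := by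
    intro n
    induction n with
    | zero => simpa using hm.symm
    | succ n ih =>
        have := step (x0.1 + n, x0.2) ih
        have e : ((x0.1 + (n : ℤ)) + 1, x0.2) = (x0.1 + ((n : ℕ) + 1 : ℕ), x0.2) := by
          simp; push_cast; ring
        rw [e] at this
        exact this
  have memD : ∀ n : ℕ, ((x0.1 + (n : ℤ)), x0.2) ∈ D := by
    intro n
    by_contra h
    have := hV0 _ h
    rw [seq n] at this
    exact absurd this (ne_of_gt hmpos)
  have hBdd : ∀ p ∈ D, p.1 ≤ (D.image Prod.fst).max' ⟨x0.1, Finset.mem_image_of_mem _ hx0D⟩ :=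
    fun p hp => Finset.le_max' _ _ (Finset.mem_image_of_mem _ hp)
  set B := (D.image Prod.fst).max' ⟨x0.1, Finset.mem_image_of_mem _ hx0D⟩ with hB
  have h1 := hBdd _ (memD ((B - x0.1).toNat + 1))
  simp only at h1
  omega

/-- A real function satisfying the Dirichlet-harmonic equation on `D` vanishes. -/
lemma harm_eq_zero (D : Finset (ℤ × ℤ)) (v : D → ℝ)
    (hv : ∀ x : D, (∑ y : D, (if LatticeAdj (x : ℤ × ℤ) (y : ℤ × ℤ) then v y else 0)) = 4 * v x) :
    ∀ x, v x = 0 := by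
  classical
  set V : ℤ × ℤ → ℝ := fun p => if h : p ∈ D then v ⟨p, h⟩ else 0 with hVdef
  have hV0 : ∀ p, p ∉ D → V p = 0 := fun p hp => dif_neg hp
  have hVv : ∀ x : D, V (x : ℤ × ℤ) = v x := by
    intro x; simp only [hVdef, dif_pos x.2]
  have key : ∀ s : ℝ, ∀ w : D → ℝ,
      (∀ x : D, (∑ y : D, (if LatticeAdj (x : ℤ × ℤ) (y : ℤ × ℤ) then w y else 0)) = 4 * w x) →
      True := fun _ _ _ => trivial
  -- the harmonic identity in terms of V
  have hkey : ∀ s : ℝ, (hs : s = 1 ∨ s = -1) → ∀ p ∈ D,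
      (s • V) (p.1 + 1, p.2) + (s • V) (p.1 - 1, p.2) + (s • V) (p.1, p.2 + 1)
        + (s • V) (p.1, p.2 - 1) = 4 * (s • V) p := by
    intro s _ p hp
    have h := hv ⟨p, hp⟩
    have e1 : (∑ y : D, (if LatticeAdj p (y : ℤ × ℤ) then v y else 0))
        = ∑ y ∈ D, (if LatticeAdj p y then V y else 0) := by
      rw [← Finset.sum_coe_sort D (fun y => if LatticeAdj p y then V y else 0)]
      refine Finset.sum_congr rfl fun y _ => ?_
      rw [hVv y]
    rw [e1, sum_adj D p V hV0] at h
    simp only [Pi.smul_apply, smul_eq_mul]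
    have hVp : V p = v ⟨p, hp⟩ := hVv ⟨p, hp⟩
    rw [hVp]
    linear_combination s * h
  intro x
  by_contra hne
  rcases lt_or_gt_of_ne hne with hneg | hpos
  · -- v x < 0 : apply no_pos to -V
    refine no_pos D (fun p => (-1 : ℝ) • V p) (fun p hp => by simp [hV0 p hp]) ?_ x ?_
    · intro p hp
      exact hkey (-1) (Or.inr rfl) p hp
    · simp only [smul_eq_mul]
      rw [hVv x]; linarith
  · refine no_pos D (fun p => (1 : ℝ) • V p) (fun p hp => by simp [hV0 p hp]) ?_ x ?_
    · intro p hp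
      exact hkey 1 (Or.inl rfl) p hp
    · simp only [smul_eq_mul]
      rw [hVv x]; linarith

/-- The Dirichlet Laplacian matrix is invertible. -/
lemma lap_det_isUnit (D : Finset (ℤ × ℤ)) : IsUnit (dirichletLapMatrix D).det := by
  classical
  rw [isUnit_iff_ne_zero]
  intro hdet
  obtain ⟨v, hvne, hv⟩ := (Matrix.exists_mulVec_eq_zero_iff).2 hdet
  -- entrywise equation
  have hent : ∀ x : D, (∑ y : D, (if LatticeAdj (x : ℤ × ℤ) (y : ℤ × ℤ) then v y else 0))
      = 4 * v x := by
    intro x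
    have h := congrFun hv x
    simp only [Matrix.mulVec, dotProduct, dirichletLapMatrix, Matrix.of_apply, Pi.zero_apply] at h
    have e : ∀ y : D, ((if LatticeAdj (x : ℤ × ℤ) (y : ℤ × ℤ) then (1 : ℂ) else 0)
        - (if x = y then 4 else 0)) * v y
        = (if LatticeAdj (x : ℤ × ℤ) (y : ℤ × ℤ) then v y else 0)
          - (if x = y then 4 * v y else 0) := by
      intro y; split_ifs <;> ring
    rw [Finset.sum_congr rfl (fun y _ => e y), Finset.sum_sub_distrib] at h
    rw [Finset.sum_ite_eq (Finset.univ : Finset D) x (fun y => 4 * v y)] at h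
    simp only [Finset.mem_univ, if_true] at h
    linear_combination h
  -- split into real and imaginary parts
  have hre : ∀ x : D, (∑ y : D, (if LatticeAdj (x : ℤ × ℤ) (y : ℤ × ℤ) then (v y).re else 0))
      = 4 * (v x).re := by
    intro x
    have h := congrArg Complex.re (hent x)
    rw [Complex.re_sum] at h
    simp only [apply_ite Complex.re, Complex.zero_re] at h
    rw [h]
    simp [Complex.mul_re]
  have him : ∀ x : D, (∑ y : D, (if LatticeAdj (x : ℤ × ℤ) (y : ℤ × ℤ) then (v y).im else 0))
      = 4 * (v x).im := by
    intro x
    have h := congrArg Complex.im (hent x)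
    rw [Complex.im_sum] at h
    simp only [apply_ite Complex.im, Complex.zero_im] at h
    rw [h]
    simp [Complex.mul_im]
  have hre0 := harm_eq_zero D (fun y => (v y).re) hre
  have him0 := harm_eq_zero D (fun y => (v y).im) him
  apply hvne
  funext x
  have : v x = 0 := Complex.ext (hre0 x) (him0 x)
  simpa using this

lemma green_zero_right (D : Finset (ℤ × ℤ)) (x y : ℤ × ℤ) (hy : y ∉ D) :
    dirichletGreen D x y = 0 := by
  unfold dirichletGreen; split <;> simp [hy]

lemma green_zero_left (D : Finset (ℤ × ℤ)) (x y : ℤ × ℤ) (hx : x ∉ D) :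
    dirichletGreen D x y = 0 := dif_neg hx

lemma green_coe (D : Finset (ℤ × ℤ)) (x y : D) :
    dirichletGreen D x y = (-(dirichletLapMatrix D)⁻¹) x y := by
  unfold dirichletGreen
  rw [dif_pos x.2, dif_pos y.2]

/-- Full Laplacian of the Green's function in the first variable. -/
lemma green_left (D : Finset (ℤ × ℤ)) {x w : ℤ × ℤ} (hx : x ∈ D) (hw : w ∈ D) :
    fullLap (fun p => dirichletGreen D p w) x = -(if x = w then 1 else 0) := by
  classical
  have hinv : dirichletLapMatrix D * (dirichletLapMatrix D)⁻¹ = 1 :=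
    Matrix.mul_nonsing_inv _ (lap_det_isUnit D)
  have hent := Matrix.ext_iff.2 hinv ⟨x, hx⟩ ⟨w, hw⟩
  rw [Matrix.mul_apply, Matrix.one_apply] at hent
  set g : ℤ × ℤ → ℂ := fun q => dirichletGreen D q w with hg
  have hginv : ∀ k : D, (dirichletLapMatrix D)⁻¹ k ⟨w, hw⟩ = -g (k : ℤ × ℤ) := by
    intro k
    have h2 := green_coe D k ⟨w, hw⟩
    simp only [Matrix.neg_apply] at h2
    have : g (k : ℤ × ℤ) = dirichletGreen D (k : ℤ × ℤ) w := rfl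
    rw [this, h2]; ring
  have e : ∀ k : D, dirichletLapMatrix D ⟨x, hx⟩ k * (dirichletLapMatrix D)⁻¹ k ⟨w, hw⟩
      = -(if LatticeAdj x (k : ℤ × ℤ) then g (k : ℤ × ℤ) else 0)
        + (if (⟨x, hx⟩ : D) = k then 4 * g (k : ℤ × ℤ) else 0) := by
    intro k
    rw [hginv k]
    simp only [dirichletLapMatrix, Matrix.of_apply]
    split_ifs <;> ring
  rw [Finset.sum_congr rfl (fun k _ => e k), Finset.sum_add_distrib] at hent
  rw [Finset.sum_ite_eq (Finset.univ : Finset D) ⟨x, hx⟩ (fun k => 4 * g (k : ℤ × ℤ))] at hent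
  simp only [Finset.mem_univ, if_true, Subtype.mk_eq_mk] at hent
  have e2 : (∑ k : D, -(if LatticeAdj x (k : ℤ × ℤ) then g (k : ℤ × ℤ) else 0))
      = -∑ y ∈ D, (if LatticeAdj x y then g y else 0) := by
    rw [← Finset.sum_neg_distrib]
    exact Finset.sum_coe_sort D (fun y => -(if LatticeAdj x y then g y else 0))
  rw [e2, sum_adj D x g (fun q hq => green_zero_left D q w hq)] at hent
  unfold fullLap
  split_ifs at hent ⊢ with h
  · linear_combination -hent
  · linear_combination -hent

/-- Full Laplacian of the Green's function in the second variable. -/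
lemma green_right (D : Finset (ℤ × ℤ)) {u w : ℤ × ℤ} (hu : u ∈ D) (hw : w ∈ D) :
    fullLap (fun p => dirichletGreen D u p) w = -(if u = w then 1 else 0) := by
  classical
  have hinv : (dirichletLapMatrix D)⁻¹ * dirichletLapMatrix D = 1 :=
    Matrix.nonsing_inv_mul _ (lap_det_isUnit D)
  have hent := Matrix.ext_iff.2 hinv ⟨u, hu⟩ ⟨w, hw⟩
  rw [Matrix.mul_apply, Matrix.one_apply] at hent
  set g : ℤ × ℤ → ℂ := fun q => dirichletGreen D u q with hg
  have hginv : ∀ k : D, (dirichletLapMatrix D)⁻¹ ⟨u, hu⟩ k = -g (k : ℤ × ℤ) := by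
    intro k
    have h2 := green_coe D ⟨u, hu⟩ k
    simp only [Matrix.neg_apply] at h2
    have : g (k : ℤ × ℤ) = dirichletGreen D u (k : ℤ × ℤ) := rfl
    rw [this, h2]; ring
  have e : ∀ k : D, (dirichletLapMatrix D)⁻¹ ⟨u, hu⟩ k * dirichletLapMatrix D k ⟨w, hw⟩
      = -(if LatticeAdj w (k : ℤ × ℤ) then g (k : ℤ × ℤ) else 0)
        + (if (⟨w, hw⟩ : D) = k then 4 * g (k : ℤ × ℤ) else 0) := by
    intro k
    rw [hginv k]
    simp only [dirichletLapMatrix, Matrix.of_apply]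
    simp only [show LatticeAdj (k : ℤ × ℤ) w ↔ LatticeAdj w (k : ℤ × ℤ) from latticeAdj_comm _ _,
      show ((k : D) = ⟨w, hw⟩) ↔ ((⟨w, hw⟩ : D) = k) from eq_comm]
    split_ifs <;> ring
  rw [Finset.sum_congr rfl (fun k _ => e k), Finset.sum_add_distrib] at hent
  rw [Finset.sum_ite_eq (Finset.univ : Finset D) ⟨w, hw⟩ (fun k => 4 * g (k : ℤ × ℤ))] at hent
  simp only [Finset.mem_univ, if_true, Subtype.mk_eq_mk] at hent
  have e2 : (∑ k : D, -(if LatticeAdj w (k : ℤ × ℤ) then g (k : ℤ × ℤ) else 0))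
      = -∑ y ∈ D, (if LatticeAdj w y then g y else 0) := by
    rw [← Finset.sum_neg_distrib]
    exact Finset.sum_coe_sort D (fun y => -(if LatticeAdj w y then g y else 0))
  rw [e2, sum_adj D w g (fun q hq => green_zero_right D u q hq)] at hent
  unfold fullLap
  split_ifs at hent ⊢ with h
  · linear_combination -hent
  · linear_combination -hent



/-- For a finitely supported `a : ℤ² → ℂ`, the following are equivalent:
(i) `a = Δ_♯ α` for some finitely supported `α`;
(ii) there is `R > 0` with `supp a ⊆ {|u| ≤ R}` such that for every `z ∈ ℤ²`, every finite
`D ⊂ ℤ²` containing `{z + u : |u| ≤ R}` and every `w ∈ D` with `|w − z| > R`, one has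
`Σ_u a(u) · G_D(z + u, w) = 0`. -/
theorem null_linear_field_iff (a : (ℤ × ℤ) →₀ ℂ) :
    (∃ α : (ℤ × ℤ) →₀ ℂ, ∀ u : ℤ × ℤ, a u = fullLap (⇑α) u) ↔
      (∃ R : ℝ, 0 < R ∧
        (∀ u : ℤ × ℤ, a u ≠ 0 → latticeNorm u ≤ R) ∧
        ∀ z : ℤ × ℤ, ∀ D : Finset (ℤ × ℤ),
          (∀ u : ℤ × ℤ, latticeNorm u ≤ R → z + u ∈ D) →
          ∀ w ∈ D, R < latticeNorm (w - z) →
            ∑ u ∈ a.support, a u * dirichletGreen D (z + u) w = 0) := by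
  classical
  constructor
  · rintro ⟨α, hα⟩
    set S : ℝ := ∑ v ∈ α.support, latticeNorm v with hS
    have hS0 : 0 ≤ S := Finset.sum_nonneg fun v _ => latticeNorm_nonneg v
    have hvS : ∀ v ∈ α.support, latticeNorm v ≤ S :=
      fun v hv => Finset.single_le_sum (fun i _ => latticeNorm_nonneg i) hv
    refine ⟨2 + S, by linarith, ?_, ?_⟩
    · -- support bound
      intro u hu
      rw [hα u] at hu
      have h5 : α (u.1 + 1, u.2) ≠ 0 ∨ α (u.1 - 1, u.2) ≠ 0 ∨ α (u.1, u.2 + 1) ≠ 0 ∨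
          α (u.1, u.2 - 1) ≠ 0 ∨ α u ≠ 0 := by
        by_contra hc
        push_neg at hc
        obtain ⟨h1, h2, h3, h4, h5⟩ := hc
        apply hu
        unfold fullLap
        rw [h1, h2, h3, h4, h5]; ring
      have key : ∀ (v d : ℤ × ℤ), α v ≠ 0 → u = v + d → latticeNorm d = 1 →
          latticeNorm u ≤ 2 + S := by
        intro v d hv hud hd
        have h1 : latticeNorm v ≤ S := hvS v (Finsupp.mem_support_iff.2 hv)
        calc latticeNorm u = latticeNorm (v + d) := by rw [hud]
          _ ≤ latticeNorm v + latticeNorm d := latticeNorm_add_le v d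
          _ ≤ S + 1 := by rw [hd]; linarith
          _ ≤ 2 + S := by linarith
      rcases h5 with h | h | h | h | h
      · exact key (u.1 + 1, u.2) (-1, 0) h (by rw [Prod.ext_iff]; constructor <;> simp)
          latticeNorm_unit₂
      · exact key (u.1 - 1, u.2) (1, 0) h (by rw [Prod.ext_iff]; constructor <;> simp)
          latticeNorm_unit₁
      · exact key (u.1, u.2 + 1) (0, -1) h (by rw [Prod.ext_iff]; constructor <;> simp)
          latticeNorm_unit₄
      · exact key (u.1, u.2 - 1) (0, 1) h (by rw [Prod.ext_iff]; constructor <;> simp)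
          latticeNorm_unit₃
      · have h1 : latticeNorm u ≤ S := hvS u (Finsupp.mem_support_iff.2 h)
        linarith
    · -- main vanishing condition
      intro z D hD w hwD hw
      set g : ℤ × ℤ → ℂ := fun u => dirichletGreen D (z + u) w with hg
      set T : Finset (ℤ × ℤ) := ((((a.support ∪ α.support)
        ∪ α.support.image (· - ((1 : ℤ), (0 : ℤ))))
        ∪ α.support.image (· - ((-1 : ℤ), (0 : ℤ))))
        ∪ α.support.image (· - ((0 : ℤ), (1 : ℤ))))
        ∪ α.support.image (· - ((0 : ℤ), (-1 : ℤ))) with hT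
    -- reindexing lemma
      have reidx : ∀ d : ℤ × ℤ, (∀ v ∈ α.support, v - d ∈ T) →
          ∑ u ∈ T, α (u + d) * g u = ∑ v ∈ α.support, α v * g (v - d) := by
        intro d hTd
        have himg : ∑ v ∈ T.image (· + d), α v * g (v - d)
            = ∑ u ∈ T, α (u + d) * g (u + d - d) :=
          Finset.sum_image (fun x _ y _ h => by
            have := congrArg (fun q => q - d) h
            simpa using this)
        simp only [add_sub_cancel_right] at himg
        rw [← himg]
        refine (Finset.sum_subset ?_ ?_).symm
        · intro v hv
          exact Finset.mem_image.2 ⟨v - d, hTd v hv, by simp⟩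
        · intro x _ hx
          rw [Finsupp.notMem_support_iff.1 hx, zero_mul]
      have hsubT : ∀ v ∈ α.support, v ∈ T ∧ v - ((1 : ℤ), (0 : ℤ)) ∈ T ∧
          v - ((-1 : ℤ), (0 : ℤ)) ∈ T ∧ v - ((0 : ℤ), (1 : ℤ)) ∈ T ∧
          v - ((0 : ℤ), (-1 : ℤ)) ∈ T := by
        intro v hv
        rw [hT]
        simp only [Finset.mem_union, Finset.mem_image]
        exact ⟨by tauto, by left; left; left; right; exact ⟨v, hv, rfl⟩,
          by left; left; right; exact ⟨v, hv, rfl⟩,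
          by left; right; exact ⟨v, hv, rfl⟩,
          by right; exact ⟨v, hv, rfl⟩⟩
      have haT : a.support ⊆ T := by
        intro x hx; rw [hT]; simp only [Finset.mem_union]; tauto
      have step0 : ∑ u ∈ a.support, a u * dirichletGreen D (z + u) w
          = ∑ u ∈ T, a u * g u := by
        refine Finset.sum_subset haT ?_
        intro x _ hx
        rw [Finsupp.notMem_support_iff.1 hx, zero_mul]
      rw [step0]
      have expand : ∀ u : ℤ × ℤ, a u = α (u + ((1 : ℤ), (0 : ℤ))) + α (u + ((-1 : ℤ), (0 : ℤ)))
          + α (u + ((0 : ℤ), (1 : ℤ))) + α (u + ((0 : ℤ), (-1 : ℤ))) - 4 * α u := by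
        intro u
        rw [hα u]
        unfold fullLap
        rw [show u + ((1 : ℤ), (0 : ℤ)) = (u.1 + 1, u.2) from by rw [Prod.ext_iff]; constructor <;> simp,
          show u + ((-1 : ℤ), (0 : ℤ)) = (u.1 - 1, u.2) from by rw [Prod.ext_iff]; constructor <;> simp <;> ring,
          show u + ((0 : ℤ), (1 : ℤ)) = (u.1, u.2 + 1) from by rw [Prod.ext_iff]; constructor <;> simp,
          show u + ((0 : ℤ), (-1 : ℤ)) = (u.1, u.2 - 1) from by rw [Prod.ext_iff]; constructor <;> simp <;> ring]
      have split : ∑ u ∈ T, a u * g u =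
          (((∑ u ∈ T, α (u + ((1 : ℤ), (0 : ℤ))) * g u)
          + (∑ u ∈ T, α (u + ((-1 : ℤ), (0 : ℤ))) * g u))
          + ((∑ u ∈ T, α (u + ((0 : ℤ), (1 : ℤ))) * g u)
          + (∑ u ∈ T, α (u + ((0 : ℤ), (-1 : ℤ))) * g u)))
          - 4 * ∑ u ∈ T, α u * g u := by
        rw [Finset.mul_sum, ← Finset.sum_add_distrib, ← Finset.sum_add_distrib,
          ← Finset.sum_add_distrib, ← Finset.sum_sub_distrib]
        refine Finset.sum_congr rfl fun u _ => ?_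
        rw [expand u]; ring
      have dir0 : ∑ u ∈ T, α u * g u = ∑ v ∈ α.support, α v * g v := by
        refine (Finset.sum_subset (fun v hv => (hsubT v hv).1) ?_).symm
        intro x _ hx
        rw [Finsupp.notMem_support_iff.1 hx, zero_mul]
      rw [split, dir0,
        reidx ((1 : ℤ), (0 : ℤ)) (fun v hv => (hsubT v hv).2.1),
        reidx ((-1 : ℤ), (0 : ℤ)) (fun v hv => (hsubT v hv).2.2.1),
        reidx ((0 : ℤ), (1 : ℤ)) (fun v hv => (hsubT v hv).2.2.2.1),
        reidx ((0 : ℤ), (-1 : ℤ)) (fun v hv => (hsubT v hv).2.2.2.2)]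
      rw [Finset.mul_sum, ← Finset.sum_add_distrib, ← Finset.sum_add_distrib,
        ← Finset.sum_add_distrib, ← Finset.sum_sub_distrib]
      have final : ∀ v ∈ α.support, α v * g (v - ((1 : ℤ), (0 : ℤ)))
          + α v * g (v - ((-1 : ℤ), (0 : ℤ))) + (α v * g (v - ((0 : ℤ), (1 : ℤ)))
          + α v * g (v - ((0 : ℤ), (-1 : ℤ)))) - 4 * (α v * g v) = 0 := by
        intro v hv
        have hvD : z + v ∈ D := hD v (by linarith [hvS v hv])
        have hfl := green_left D hvD hwD
        have hne : z + v ≠ w := by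
          intro hzw
          have : w - z = v := by rw [← hzw]; ring
          rw [this] at hw
          linarith [hvS v hv]
        rw [if_neg hne, neg_zero] at hfl
        simp only [fullLap] at hfl
        have a1 : z + (v - ((1 : ℤ), (0 : ℤ))) = ((z + v).1 - 1, (z + v).2) := by
          rw [Prod.ext_iff]
          refine ⟨?_, ?_⟩ <;> simp [Prod.fst_add, Prod.snd_add, Prod.fst_sub, Prod.snd_sub] <;> ring
        have a2 : z + (v - ((-1 : ℤ), (0 : ℤ))) = ((z + v).1 + 1, (z + v).2) := by
          rw [Prod.ext_iff]
          refine ⟨?_, ?_⟩ <;> simp [Prod.fst_add, Prod.snd_add, Prod.fst_sub, Prod.snd_sub] <;> ring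
        have a3 : z + (v - ((0 : ℤ), (1 : ℤ))) = ((z + v).1, (z + v).2 - 1) := by
          rw [Prod.ext_iff]
          refine ⟨?_, ?_⟩ <;> simp [Prod.fst_add, Prod.snd_add, Prod.fst_sub, Prod.snd_sub] <;> ring
        have a4 : z + (v - ((0 : ℤ), (-1 : ℤ))) = ((z + v).1, (z + v).2 + 1) := by
          rw [Prod.ext_iff]
          refine ⟨?_, ?_⟩ <;> simp [Prod.fst_add, Prod.snd_add, Prod.fst_sub, Prod.snd_sub] <;> ring
        simp only [hg]
        rw [a1, a2, a3, a4]
        linear_combination α v * hfl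
      rw [Finset.sum_congr rfl final, Finset.sum_const_zero]
  · rintro ⟨R, hR, hsupp, hmain⟩
    set N : ℤ := ⌈R⌉ + 2 with hN
    have hRN : R + 1 < (N : ℝ) := by
      rw [hN]; push_cast; linarith [Int.le_ceil R]
    set D : Finset (ℤ × ℤ) := Finset.Icc (-N, -N) (N, N) with hD
    have hmemD : ∀ u : ℤ × ℤ, latticeNorm u ≤ R → u ∈ D := by
      intro u hu
      have b1 : |(u.1 : ℝ)| ≤ (N : ℝ) := by linarith [abs_fst_le u]
      have b2 : |(u.2 : ℝ)| ≤ (N : ℝ) := by linarith [abs_snd_le u]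
      rw [abs_le] at b1 b2
      have i1 : -N ≤ u.1 := by exact_mod_cast b1.1
      have i2 : u.1 ≤ N := by exact_mod_cast b1.2
      have i3 : -N ≤ u.2 := by exact_mod_cast b2.1
      have i4 : u.2 ≤ N := by exact_mod_cast b2.2
      rw [hD, Finset.mem_Icc, Prod.le_def, Prod.le_def]
      exact ⟨⟨i1, i3⟩, ⟨i2, i4⟩⟩
    have hfar : ∀ q : ℤ × ℤ, (q.1 ≤ -N ∨ N ≤ q.1 ∨ q.2 ≤ -N ∨ N ≤ q.2) →
        R < latticeNorm q := by
      intro q hq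
      have c1 : ∀ m : ℤ, (m ≤ -N ∨ N ≤ m) → (N : ℝ) ≤ |(m : ℝ)| := by
        intro m hm
        rcases hm with hm | hm
        · refine le_abs.2 (Or.inr ?_)
          have : (m : ℝ) ≤ -(N : ℝ) := by exact_mod_cast hm
          linarith
        · exact le_abs.2 (Or.inl (by exact_mod_cast hm))
      rcases hq with h | h | h | h
      · have := c1 q.1 (Or.inl h); linarith [abs_fst_le q]
      · have := c1 q.1 (Or.inr h); linarith [abs_fst_le q]
      · have := c1 q.2 (Or.inl h); linarith [abs_snd_le q]
      · have := c1 q.2 (Or.inr h); linarith [abs_snd_le q]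
    have hgreen0 : ∀ p : ℤ × ℤ, p ∉ D →
        (-∑ u ∈ a.support, a u * dirichletGreen D u p) = 0 := by
      intro p hp
      rw [Finset.sum_congr rfl (fun u _ => by rw [green_zero_right D u p hp, mul_zero]),
        Finset.sum_const_zero, neg_zero]
    set α : (ℤ × ℤ) →₀ ℂ := Finsupp.onFinset D
      (fun p => -∑ u ∈ a.support, a u * dirichletGreen D u p)
      (fun p hp => by by_contra h; exact hp (hgreen0 p h)) with hαdef
    have hαapp : ∀ p : ℤ × ℤ, α p = -∑ u ∈ a.support, a u * dirichletGreen D u p :=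
      fun p => by rw [hαdef]; rfl
    have hαz : ∀ p : ℤ × ℤ, R < latticeNorm p → α p = 0 := by
      intro p hp
      by_cases hpD : p ∈ D
      · have hD0 : ∀ u : ℤ × ℤ, latticeNorm u ≤ R → (0 : ℤ × ℤ) + u ∈ D := by
          intro u hu; rw [zero_add]; exact hmemD u hu
        have h := hmain 0 D hD0 p hpD (by rw [sub_zero]; exact hp)
        simp only [zero_add] at h
        rw [hαapp p, h, neg_zero]
      · rw [hαapp p]
        exact hgreen0 p hpD
    refine ⟨α, ?_⟩
    intro u
    by_cases hu : u ∈ D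
    · have comb : fullLap (⇑α) u = ∑ v ∈ a.support,
          a v * (-(fullLap (fun p => dirichletGreen D v p) u)) := by
        unfold fullLap
        rw [hαapp, hαapp, hαapp, hαapp, hαapp]
        rw [show ∀ x y z₁ w₁ t : ℂ, -x + -y + -z₁ + -w₁ - 4 * -t
            = -(x + y + z₁ + w₁ - 4 * t) from fun x y z₁ w₁ t => by ring]
        rw [← Finset.sum_add_distrib, ← Finset.sum_add_distrib, ← Finset.sum_add_distrib,
          Finset.mul_sum, ← Finset.sum_sub_distrib, ← Finset.sum_neg_distrib]
        refine Finset.sum_congr rfl fun v _ => ?_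
        ring
      rw [comb]
      have hterm : ∀ v ∈ a.support,
          a v * (-(fullLap (fun p => dirichletGreen D v p) u)) = if v = u then a v else 0 := by
        intro v hv
        have hvD : v ∈ D := hmemD v (hsupp v (Finsupp.mem_support_iff.1 hv))
        rw [green_right D hvD hu]
        split_ifs <;> ring
      rw [Finset.sum_congr rfl hterm, Finset.sum_ite_eq' a.support u a]
      by_cases h : u ∈ a.support
      · rw [if_pos h]
      · rw [if_neg h]
        exact Finsupp.notMem_support_iff.1 h
    · have hcase : u.1 ≤ -(N + 1) ∨ N + 1 ≤ u.1 ∨ u.2 ≤ -(N + 1) ∨ N + 1 ≤ u.2 := by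
        by_contra hc
        push_neg at hc
        apply hu
        rw [hD, Finset.mem_Icc, Prod.le_def, Prod.le_def]
        refine ⟨⟨by omega, by omega⟩, ⟨by omega, by omega⟩⟩
      have ha0 : a u = 0 := by
        by_contra h
        have h1 := hsupp u h
        have h2 := hfar u (by omega)
        linarith
      have z1 : α (u.1 + 1, u.2) = 0 := hαz _ (hfar _ (by dsimp; omega))
      have z2 : α (u.1 - 1, u.2) = 0 := hαz _ (hfar _ (by dsimp; omega))
      have z3 : α (u.1, u.2 + 1) = 0 := hαz _ (hfar _ (by dsimp; omega))
      have z4 : α (u.1, u.2 - 1) = 0 := hαz _ (hfar _ (by dsimp; omega))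
      have z5 : α u = 0 := hαz _ (hfar _ (by omega))
      rw [ha0]
      unfold fullLap
      rw [z1, z2, z3, z4, z5]
      ring
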